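/- Let n ≥ 3 and let a ∈ A_n. If the associator (x, a, y) = 0 for all x, y ∈ A_n, then a = r·e_0 for some r ∈ ℝ, i.e. the pure part of a is zero. -/

import Mathlib

noncomputable section

open scoped Quaternion

/-- The Cayley–Dickson algebra `A n = ℝ^(2^n)` as a type. -/
def CD : ℕ → Type
  | 0 => ℝ
  | n + 1 => CD n × CD n

namespace CD

instance instAddCommGroup : (n : ℕ) → AddCommGroup (CD n)
  | 0 => inferInstanceAs (AddCommGroup ℝ)
  | n + 1 =>
    letI := instAddCommGroup n
    inferInstanceAs (AddCommGroup (CD n × CD n))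

instance instModule : (n : ℕ) → Module ℝ (CD n)
  | 0 => inferInstanceAs (Module ℝ ℝ)
  | n + 1 =>
    letI := instModule n
    inferInstanceAs (Module ℝ (CD n × CD n))

/-- Conjugation in the Cayley–Dickson algebra. -/
def conj : {n : ℕ} → CD n → CD n
  | 0, x => x
  | _ + 1, x => (conj x.1, -x.2)

/-- Cayley–Dickson multiplication. -/
def mul : {n : ℕ} → CD n → CD n → CD n
  | 0, x, y => Mul.mul (α := ℝ) x y
  | _ + 1, x, y =>
    (mul x.1 y.1 - mul (conj y.2) x.2, mul y.2 x.1 + mul x.2 (conj y.1))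

instance instMul (n : ℕ) : Mul (CD n) := ⟨mul⟩

/-- The multiplicative unit `e₀`. -/
def one : {n : ℕ} → CD n
  | 0 => (1 : ℝ)
  | _ + 1 => (one, 0)

instance instOne (n : ℕ) : One (CD n) := ⟨one⟩

/-- The Euclidean inner product on `A n = ℝ^(2^n)`. -/
def inner : {n : ℕ} → CD n → CD n → ℝ
  | 0, x, y => (x * y : ℝ)
  | _ + 1, x, y => inner x.1 y.1 + inner x.2 y.2

/-- The Euclidean norm on `A n = ℝ^(2^n)`. -/
def norm {n : ℕ} (x : CD n) : ℝ := Real.sqrt (inner x x)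

/-- `ã = (-a₂, a₁)`. -/
def tilde {n : ℕ} (a : CD (n + 1)) : CD (n + 1) := (-a.2, a.1)

/-- `ẽ₀ = (0, e₀)`. -/
def etilde (n : ℕ) : CD (n + 1) := ((0 : CD n), (1 : CD n))

/-- An element is pure if its conjugate is its negative. -/
def IsPure {n : ℕ} (a : CD n) : Prop := conj a = -a

/-- An element of `A (n+1)` is doubly pure if both of its coordinates are pure. -/
def IsDoublyPure {n : ℕ} (a : CD (n + 1)) : Prop := IsPure a.1 ∧ IsPure a.2

/-- The associator `(a,b,c) = (ab)c - a(bc)`. -/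
def assoc {n : ℕ} (a b c : CD n) : CD n := a * b * c - a * (b * c)

/-- An element is alternative if `(a,a,x) = 0` for all `x`. -/
def IsAlternative {n : ℕ} (a : CD n) : Prop := ∀ x : CD n, assoc a a x = 0

/-- An element is strongly alternative if `(a,a,x) = 0` and `(a,x,x) = 0` for all `x`. -/
def IsStronglyAlternative {n : ℕ} (a : CD n) : Prop :=
  (∀ x : CD n, assoc a a x = 0) ∧ (∀ x : CD n, assoc a x x = 0)

/-- The pure (imaginary) part of an element. -/
def im {n : ℕ} (a : CD n) : CD n := (2⁻¹ : ℝ) • (a - conj a)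

/-- `H a`, the span of `{e₀, ã, a, ẽ₀}`. -/
def H {n : ℕ} (a : CD (n + 1)) : Submodule ℝ (CD (n + 1)) :=
  Submodule.span ℝ {(1 : CD (n + 1)), tilde a, a, etilde n}

/-- The orthogonal complement of `H a`. -/
def Hperp {n : ℕ} (a : CD (n + 1)) : Set (CD (n + 1)) :=
  {x | ∀ y ∈ H a, inner y x = 0}

set_option linter.dupNamespace false

lemma mul_def' {n : ℕ} (x y : CD (n+1)) :
    x * y = (x.1 * y.1 - conj y.2 * x.2, y.2 * x.1 + x.2 * conj y.1) := rfl

lemma one_def {n : ℕ} : (1 : CD (n+1)) = ((1 : CD n), (0 : CD n)) := rfl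

lemma smul_def {n : ℕ} (r : ℝ) (x : CD (n+1)) : r • x = (r • x.1, r • x.2) := rfl

lemma conj_def {n : ℕ} (x : CD (n+1)) : conj x = (conj x.1, -x.2) := rfl

lemma zero_def {n : ℕ} : (0 : CD (n+1)) = ((0 : CD n), (0 : CD n)) := rfl

lemma neg_def {n : ℕ} (x : CD (n+1)) : -x = (-x.1, -x.2) := rfl

lemma conj_zero' : ∀ {n : ℕ}, conj (0 : CD n) = 0
  | 0 => rfl
  | n+1 => by erw [zero_def, conj_def]; simp [conj_zero']; rfl

lemma conj_one' : ∀ {n : ℕ}, conj (1 : CD n) = 1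
  | 0 => rfl
  | n+1 => by erw [one_def, conj_def]; simp [conj_one']; rfl

lemma conj_neg' : ∀ {n : ℕ} (x : CD n), conj (-x) = -conj x
  | 0, _ => rfl
  | n+1, x => by
    erw [neg_def, conj_def, conj_def, conj_neg']
    rfl

lemma conj_conj' : ∀ {n : ℕ} (x : CD n), conj (conj x) = x
  | 0, _ => rfl
  | n+1, x => by erw [conj_def, conj_def]; simp [conj_conj']; rfl

lemma conj_smul' : ∀ {n : ℕ} (r : ℝ) (x : CD n), conj (r • x) = r • conj x
  | 0, _, _ => rfl
  | n+1, r, x => by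
    erw [smul_def, conj_def, conj_def, smul_def]
    simp [conj_smul']
    rfl

lemma mul_zero' : ∀ {n : ℕ} (x : CD n), x * 0 = 0 ∧ (0 : CD n) * x = 0
  | 0, x => ⟨mul_zero (M₀ := ℝ) x, zero_mul (M₀ := ℝ) x⟩
  | n+1, x => by
    have h1 : ∀ y : CD n, y * 0 = 0 := fun y => (mul_zero' y).1
    have h2 : ∀ y : CD n, (0:CD n) * y = 0 := fun y => (mul_zero' y).2
    constructor <;> (erw [zero_def, mul_def']; simp [conj_zero', h1, h2]; rfl)

lemma mul_one' : ∀ {n : ℕ} (x : CD n), x * 1 = x ∧ (1 : CD n) * x = x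
  | 0, x => ⟨mul_one (M := ℝ) x, one_mul (M := ℝ) x⟩
  | n+1, x => by
    have h1 : ∀ y : CD n, y * 1 = y := fun y => (mul_one' y).1
    have h2 : ∀ y : CD n, (1:CD n) * y = y := fun y => (mul_one' y).2
    have z1 : ∀ y : CD n, y * 0 = 0 := fun y => (mul_zero' y).1
    have z2 : ∀ y : CD n, (0:CD n) * y = 0 := fun y => (mul_zero' y).2
    constructor <;> (erw [one_def, mul_def']; simp [conj_zero', conj_one', h1, h2, z1, z2]; rfl)

lemma neg_mul' : ∀ {n : ℕ} (x y : CD n), (-x) * y = -(x * y) ∧ x * (-y) = -(x * y)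
  | 0, x, y => ⟨neg_mul (α := ℝ) x y, mul_neg (α := ℝ) x y⟩
  | n+1, x, y => by
    have h1 : ∀ u v : CD n, (-u) * v = -(u * v) := fun u v => (neg_mul' u v).1
    have h2 : ∀ u v : CD n, u * (-v) = -(u * v) := fun u v => (neg_mul' u v).2
    constructor <;>
      (simp only [mul_def']; simp only [neg_def, h1, h2, conj_neg']
       apply Prod.ext <;> (erw [neg_def]; dsimp only; abel))

lemma smul_mul' : ∀ {n : ℕ} (r : ℝ) (x y : CD n),
    (r • x) * y = r • (x * y) ∧ x * (r • y) = r • (x * y)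
  | 0, r, x, y => ⟨smul_mul_assoc (α := ℝ) (β := ℝ) r x y,
      mul_smul_comm (α := ℝ) (β := ℝ) r x y⟩
  | n+1, r, x, y => by
    have h1 : ∀ u v : CD n, (r • u) * v = r • (u * v) := fun u v => (smul_mul' r u v).1
    have h2 : ∀ u v : CD n, u * (r • v) = r • (u * v) := fun u v => (smul_mul' r u v).2
    constructor <;>
      (simp only [mul_def']; simp only [smul_def, h1, h2, conj_smul']
       apply Prod.ext <;> (erw [smul_def]; dsimp only; simp [smul_sub, smul_add]))

lemma one_ne_zero' : ∀ {n : ℕ}, (1 : CD n) ≠ 0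
  | 0 => (one_ne_zero : (1:ℝ) ≠ 0)
  | n+1 => by
    rw [one_def, zero_def]
    intro hc
    exact one_ne_zero' (congrArg Prod.fst hc)

lemma eq_zero_of_neg_eq' {n : ℕ} (x : CD n) (h : -x = x) : x = 0 := by
  have h2 : (2:ℝ) • x = 0 := by
    rw [two_smul]
    nth_rewrite 1 [← h]
    exact neg_add_cancel x
  have := smul_eq_zero.mp h2
  simpa using this

lemma smul_eq_zero' {n : ℕ} {r : ℝ} {x : CD n} (h : r • x = 0) : r = 0 ∨ x = 0 :=
  smul_eq_zero.mp h

lemma selfconj_eq_smul_one : ∀ {n : ℕ} (z : CD n), conj z = z → ∃ r : ℝ, z = r • 1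
  | 0, z, _ => ⟨z, (mul_one (M := ℝ) z).symm⟩
  | n+1, z, hz => by
    rw [conj_def] at hz
    have h1 : conj z.1 = z.1 := congrArg Prod.fst hz
    have h2 : z.2 = 0 := eq_zero_of_neg_eq' z.2 (congrArg Prod.snd hz)
    obtain ⟨r, hr⟩ := selfconj_eq_smul_one z.1 h1
    refine ⟨r, ?_⟩
    erw [one_def, smul_def]
    have hzz : z = (z.1, z.2) := rfl
    rw [hzz, h2, hr]
    simp
    rfl

lemma mk_eq_mk {n : ℕ} {a b c d : CD n} (h : ((a, b) : CD (n+1)) = (c, d)) :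
    a = c ∧ b = d :=
  ⟨congrArg Prod.fst h, congrArg Prod.snd h⟩

lemma mk_mul_mk {n : ℕ} (a b c d : CD n) :
    HMul.hMul (α := CD (n+1)) (β := CD (n+1)) (γ := CD (n+1)) (a, b) (c, d)
      = (a * c - conj d * b, d * a + b * conj c) :=
  mul_def' (a, b) (c, d)

lemma central_eq_smul_one : ∀ (k : ℕ) (z : CD (k+2)),
    (∀ x : CD (k+2), z * x = x * z) → ∃ r : ℝ, z = r • 1 := by
  intro k z hz
  set u : CD (k+1) := ((0 : CD k), (1 : CD k)) with hu
  have hcu : conj u = -u := by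
    erw [hu, conj_def, neg_def]
    simp [conj_zero']
    rfl
  have hzz : z = (z.1, z.2) := rfl
  -- step 1 : z.2 = 0
  have e1 := hz ((u, 0) : CD (k+2))
  rw [hzz, mk_mul_mk, mk_mul_mk] at e1
  simp only [conj_zero', (mul_zero' _).1, (mul_zero' _).2, sub_zero, zero_add,
    add_zero, zero_sub, zero_mul, mul_zero] at e1
  have e1b : z.2 * conj u = z.2 * u := (mk_eq_mk e1).2
  rw [hcu, (neg_mul' z.2 u).2] at e1b
  have e1c : z.2 * u = 0 := eq_zero_of_neg_eq' _ e1b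
  have hz2z : z.2 = (z.2.1, z.2.2) := rfl
  rw [hz2z, hu, mk_mul_mk] at e1c
  simp only [conj_zero', conj_one', (mul_zero' _).1, (mul_zero' _).2,
    (mul_one' _).1, (mul_one' _).2, zero_sub, sub_zero, add_zero, zero_add] at e1c
  rw [zero_def] at e1c
  have hz21 : z.2.1 = 0 := (mk_eq_mk e1c).2
  have hz22 : z.2.2 = 0 := by
    have h := (mk_eq_mk e1c).1
    rwa [neg_eq_zero] at h
  have hz2 : z.2 = 0 := by rw [hz2z, hz21, hz22]; rfl
  -- step 2 : conj z.1 = z.1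
  have e2 := hz (((0 : CD (k+1)), 1) : CD (k+2))
  rw [hzz, mk_mul_mk, mk_mul_mk] at e2
  simp only [conj_zero', conj_one', (mul_zero' _).1, (mul_zero' _).2,
    (mul_one' _).1, (mul_one' _).2, zero_sub, sub_zero, add_zero, zero_add] at e2
  have e2b : z.1 = conj z.1 := by
    have h := (mk_eq_mk e2).2
    simpa using h
  obtain ⟨r, hr⟩ := selfconj_eq_smul_one z.1 e2b.symm
  refine ⟨r, ?_⟩
  erw [one_def, smul_def]
  rw [hzz, hz2, hr]
  simp
  rfl

lemma mul_et {m : ℕ} (z : CD (m+1)) :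
    HMul.hMul (α := CD (m+1)) (β := CD (m+1)) (γ := CD (m+1))
      z ((0 : CD m), (1 : CD m)) = (-z.2, z.1) := by
  have hzz : z = (z.1, z.2) := rfl
  rw [hzz, mk_mul_mk, conj_zero', conj_one', (mul_zero' z.1).1, (mul_one' z.2).2,
    (mul_zero' z.2).1, (mul_one' z.1).2, zero_sub, add_zero]

lemma eq_zero_of_mul_et {m : ℕ} {z : CD (m+1)}
    (h : HMul.hMul (α := CD (m+1)) (β := CD (m+1)) (γ := CD (m+1))
      z ((0 : CD m), (1 : CD m)) = 0) : z = 0 := by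
  rw [mul_et, zero_def] at h
  have h1 := (mk_eq_mk h).2
  have h2 := neg_eq_zero.mp (mk_eq_mk h).1
  have hzz : z = (z.1, z.2) := rfl
  rw [hzz, h1, h2, ← zero_def]

end CD

open CD in
/-- For `n ≥ 3`, if `(x, a, y) = 0` for all `x, y ∈ A n`, then
`a = r·e₀` for some real `r`. -/
theorem eq_smul_one_of_assoc_middle_eq_zero (n : ℕ) (hn : 3 ≤ n) (a : CD n)
    (h : ∀ x y : CD n, CD.assoc x a y = 0) :
    ∃ r : ℝ, a = r • (1 : CD n) := by
  obtain ⟨k, rfl⟩ : ∃ k, n = k + 3 := ⟨n - 3, by omega⟩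
  have h' : ∀ x y : CD (k+3), (x * a) * y = x * (a * y) := fun x y =>
    sub_eq_zero.mp (h x y)
  have haa : a = (a.1, a.2) := rfl
  have z1 : ∀ {m : ℕ} (y : CD m), y * 0 = 0 := fun y => (mul_zero' y).1
  have z2 : ∀ {m : ℕ} (y : CD m), (0 : CD m) * y = 0 := fun y => (mul_zero' y).2
  have o1 : ∀ {m : ℕ} (y : CD m), y * 1 = y := fun y => (mul_one' y).1
  have o2 : ∀ {m : ℕ} (y : CD m), (1 : CD m) * y = y := fun y => (mul_one' y).2
  have ng1 : ∀ {m : ℕ} (u v : CD m), (-u) * v = -(u * v) := fun u v => (neg_mul' u v).1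
  have ng2 : ∀ {m : ℕ} (u v : CD m), u * (-v) = -(u * v) := fun u v => (neg_mul' u v).2
  -- the key identity `(a.2 * x) * conj y = (a.2 * conj y) * x`
  have E2 : ∀ x₁ y₁ : CD (k+2), (a.2 * x₁) * conj y₁ = (a.2 * conj y₁) * x₁ := by
    intro x₁ y₁
    have e := h' ((x₁, 0) : CD (k+3)) ((y₁, 0) : CD (k+3))
    rw [haa] at e
    simp only [mk_mul_mk, conj_zero', conj_one', z1, z2, o1, o2, ng1, ng2,
      sub_zero, zero_sub, add_zero, zero_add, neg_neg] at e
    exact (mk_eq_mk e).2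
  -- Step 1 : a.2 = 0
  have ha2 : a.2 = 0 := by
    set u : CD (k+1) := ((0 : CD k), (1 : CD k)) with hu
    set w : CD (k+2) := ((0 : CD (k+1)), (-1 : CD (k+1))) with hw
    set w' : CD (k+2) := ((0 : CD (k+1)), (1 : CD (k+1))) with hw'
    have hcu : conj w = w' := by
      erw [hw, hw', conj_def]
      simp [conj_zero']
      rfl
    have hcuu : conj u = -u := by
      erw [hu, conj_def, neg_def]
      simp [conj_zero']
      rfl
    have ha2z : a.2 = (a.2.1, a.2.2) := rfl
    have e := E2 ((u, 0) : CD (k+2)) w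
    rw [hcu] at e
    rw [hw'] at e
    rw [ha2z, mk_mul_mk, mk_mul_mk, mk_mul_mk, mk_mul_mk] at e
    simp only [conj_zero', conj_one', hcuu, z1, z2, o1, o2, ng1, ng2,
      sub_zero, zero_sub, add_zero, zero_add, neg_neg, neg_zero] at e
    have c1 : a.2.2 * u = 0 := eq_zero_of_neg_eq' _ ((mk_eq_mk e).1).symm
    have c2 : a.2.1 * u = 0 := eq_zero_of_neg_eq' _ ((mk_eq_mk e).2).symm
    rw [hu] at c1 c2
    rw [ha2z, eq_zero_of_mul_et c1, eq_zero_of_mul_et c2, ← zero_def]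
  -- Step 2 : conj a.1 is central in CD (k+2)
  have hcen1 : ∀ x : CD (k+2), conj a.1 * x = x * conj a.1 := by
    intro x
    have e := h' ((0, x) : CD (k+3)) (((0 : CD (k+2)), 1) : CD (k+3))
    rw [haa, ha2] at e
    simp only [mk_mul_mk, conj_zero', conj_one', z1, z2, o1, o2, ng1, ng2,
      sub_zero, zero_sub, add_zero, zero_add, neg_neg] at e
    exact (neg_inj.mp (mk_eq_mk e).1).symm
  obtain ⟨r, hr⟩ := central_eq_smul_one k (CD.conj a.1) hcen1
  have hr1 : a.1 = r • 1 := by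
    have := congrArg CD.conj hr
    rwa [conj_conj', conj_smul', conj_one'] at this
  have h1 : r • (1 : CD (k+3)) = ((r • (1 : CD (k+2)), (0 : CD (k+2))) : CD (k+3)) := by
    rw [smul_def]
    exact Prod.ext rfl (smul_zero r)
  exact ⟨r, by rw [haa, ha2, hr1, h1]⟩
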